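/- In the definition of R_{P,u₀}, condition (2) does not depend on the choice of local section: if f satisfies |f([u₀gh, x']) − f([u₀h, x'])| < ε for all g ∈ V, h ∈ G, x ∈ U with respect to one continuous section x ↦ x' of p over U, then the same inequality (with the same V) holds with respect to any other continuous section x ↦ x'' of p over U. -/

import Mathlib

/-- The diagonal equivalence relation on `P × P`. -/
def gaugeRel {G P : Type*} (act : P → G → P) : (P × P) → (P × P) → Prop :=
  fun a b => ∃ g : G, b.1 = act a.1 g ∧ b.2 = act a.2 g

/-- In the definition of `R_{P,u₀}`, condition (2) does not depend on the choice of
local section: if `f` satisfies `|f([u₀gh, x']) − f([u₀h, x'])| < ε` for all `g ∈ V`,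
`h ∈ G`, `x ∈ U` with respect to one continuous section `x ↦ x'` of `p` over `U`, then
the same inequality (with the same `V`) holds with respect to any other continuous
section `x ↦ x''` of `p` over `U`. -/
theorem ruc_condition_section_independent {G P X : Type*} [Group G]
    [TopologicalSpace G] [IsTopologicalGroup G] [TopologicalSpace P] [TopologicalSpace X]
    (act : P → G → P) (p : P → X)
    (hact_one : ∀ u, act u 1 = u)
    (hact_mul : ∀ u g h, act (act u g) h = act u (g * h))
    (hp : ∀ u g, p (act u g) = p u)
    (hfree : ∀ u g, act u g = u → g = 1)
    (hfibtrans : ∀ u v, p u = p v → ∃ g, act u g = v)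
    (u₀ : P) (U : Set X)
    (σ₁ σ₂ : X → P)
    (hσ₁c : ContinuousOn σ₁ U) (hσ₂c : ContinuousOn σ₂ U)
    (hpσ₁ : ∀ x ∈ U, p (σ₁ x) = x) (hpσ₂ : ∀ x ∈ U, p (σ₂ x) = x)
    (f : Quot (gaugeRel act) → ℂ)
    (ε : ℝ) (hε : 0 < ε) (V : Set G) (hV : V ∈ nhds (1 : G))
    (h1 : ∀ g ∈ V, ∀ h : G, ∀ x ∈ U,
      ‖f (Quot.mk (gaugeRel act) (act u₀ (g * h), σ₁ x))
        - f (Quot.mk (gaugeRel act) (act u₀ h, σ₁ x))‖ < ε) :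
    ∀ g ∈ V, ∀ h : G, ∀ x ∈ U,
      ‖f (Quot.mk (gaugeRel act) (act u₀ (g * h), σ₂ x))
        - f (Quot.mk (gaugeRel act) (act u₀ h, σ₂ x))‖ < ε := by
  intro g hg h x hx
  obtain ⟨k, hk⟩ := hfibtrans (σ₁ x) (σ₂ x) (by rw [hpσ₁ x hx, hpσ₂ x hx])
  have key : ∀ h' : G, Quot.mk (gaugeRel act) (act u₀ h', σ₂ x)
      = Quot.mk (gaugeRel act) (act u₀ (h' * k⁻¹), σ₁ x) := by
    intro h'
    refine (Quot.sound ⟨k, ?_, hk.symm⟩).symm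
    simp [hact_mul]
  have := h1 g hg (h * k⁻¹) x hx
  rw [key (g * h), key h, mul_assoc]
  exact this
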